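/- Let B be a bialgebra. Define on the collection 𝔹 with 𝔹(n) := B^{⊗n} the partial compositions (u₁⊗⋯⊗u_m) ∘_i (v₁⊗⋯⊗v_n) := u₁⊗⋯⊗u_{i-1} ⊗ Δ^{n-1}(u_i)·(v₁⊗⋯⊗v_n) ⊗ u_{i+1}⊗⋯⊗u_m. Then these compositions satisfy the operad associativity axiom: for u ∈ B^{⊗a}, v ∈ B^{⊗b}, w ∈ B^{⊗c} and j ≤ i < b+j one has (u ∘_j v) ∘_i w = u ∘_j (v ∘_{i-j+1} w), and this follows from (and requires) the coassociativity identity Δ^{b+c-2} = (id^{⊗(i-1)} ⊗ Δ^{c-1} ⊗ id^{⊗(b-i)}) ∘ Δ^{b-1}. -/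

import Mathlib

open TensorProduct Coalgebra

universe u

section TpowB

variable (k : Type u) [CommRing k]
variable (B : Type u) [Ring B] [Bialgebra k B]

/-- The iterated tensor power `B^{⊗n}` of the bialgebra `B`, as a `k`-algebra
(with `B^{⊗0} = k`, `B^{⊗(n+1)} = B^{⊗n} ⊗ B`). -/
noncomputable def TpowB : ℕ → AlgCat.{u} k
  | 0 => AlgCat.of k k
  | n + 1 => AlgCat.of k (TpowB n ⊗[k] B)

/-- The iterated coproduct `Δ^{n-1} : B → B^{⊗n}` (with `Δ^{-1} = ε`, `Δ^0 = id`). -/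
noncomputable def comulIter : (n : ℕ) → (B →ₗ[k] TpowB k B n)
  | 0 => Coalgebra.counit (R := k) (A := B)
  | n + 1 => (TensorProduct.map (comulIter n) LinearMap.id)
      ∘ₗ (Coalgebra.comul (R := k) (A := B))

/-- The canonical splitting `B^{⊗(a+b)} ≅ B^{⊗a} ⊗ B^{⊗b}`. -/
noncomputable def tpowSplit : (a b : ℕ) → (TpowB k B (a + b) ≃ₗ[k] TpowB k B a ⊗[k] TpowB k B b)
  | a, 0 => (TensorProduct.rid k (TpowB k B a)).symm
  | a, b + 1 =>
      (TensorProduct.congr (tpowSplit a b) (LinearEquiv.refl k B)).trans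
        (TensorProduct.assoc k (TpowB k B a) (TpowB k B b) B)

/-- The map `id^{⊗p} ⊗ Δ^{c-1} ⊗ id^{⊗q} : B^{⊗(p+1+q)} → B^{⊗(p+c+q)}`, applying the
iterated coproduct in position `p+1`. -/
noncomputable def comulAt (p q c : ℕ) : TpowB k B (p + 1 + q) →ₗ[k] TpowB k B (p + c + q) :=
  (tpowSplit k B (p + c) q).symm.toLinearMap
    ∘ₗ TensorProduct.map (tpowSplit k B p c).symm.toLinearMap LinearMap.id
    ∘ₗ TensorProduct.map (TensorProduct.map LinearMap.id (comulIter k B c)) LinearMap.id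
    ∘ₗ (tpowSplit k B (p + 1) q).toLinearMap

/-- The embedding `v ↦ 1^{⊗p} ⊗ v ⊗ 1^{⊗q} : B^{⊗c} → B^{⊗(p+c+q)}`. -/
noncomputable def embedAt (p q c : ℕ) : TpowB k B c →ₗ[k] TpowB k B (p + c + q) :=
  (tpowSplit k B (p + c) q).symm.toLinearMap
    ∘ₗ ((TensorProduct.mk k (TpowB k B (p + c)) (TpowB k B q)).flip 1)
    ∘ₗ (tpowSplit k B p c).symm.toLinearMap
    ∘ₗ (TensorProduct.mk k (TpowB k B p) (TpowB k B c) 1)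

/-- The operadic partial composition of the operad `𝔹` built from the bialgebra `B`:
`(u₁⊗⋯⊗u_m) ∘ᵢ (v₁⊗⋯⊗v_n) = u₁⊗⋯⊗u_{i-1} ⊗ Δ^{n-1}(u_i)(v₁⊗⋯⊗v_n) ⊗ u_{i+1}⊗⋯⊗u_m`,
written with `i = p + 1`, `m = p + 1 + q`, `n = c`. -/
noncomputable def circB (p q c : ℕ) (u : TpowB k B (p + 1 + q)) (v : TpowB k B c) :
    TpowB k B (p + c + q) :=
  comulAt k B p q c u * embedAt k B p q c v

/-- Transport along an equality of tensor-power lengths. -/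
noncomputable def tpowCast : ∀ {a b : ℕ}, a = b → (TpowB k B a ≃ₗ[k] TpowB k B b)
  | _, _, rfl => LinearEquiv.refl _ _

end TpowB
section Aux
attribute [reducible] TpowB
set_option synthInstance.maxHeartbeats 1000000
set_option maxHeartbeats 2000000
variable (k : Type u) [CommRing k] (B : Type u) [Ring B] [Bialgebra k B]

lemma tpowSplit_symm_succ (a b : ℕ) (x : TpowB k B a) (z : TpowB k B b) (β : B) :
    (tpowSplit k B a (b+1)).symm (x ⊗ₜ (z ⊗ₜ β)) =
      ((tpowSplit k B a b).symm (x ⊗ₜ z) ⊗ₜ β : (TpowB k B (a+b) : Type u) ⊗[k] B) := rfl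

lemma comulAt_zero (m c : ℕ) (x : (TpowB k B m : Type u) ⊗[k] B) :
    comulAt k B m 0 c x =
      (tpowSplit k B m c).symm ((LinearMap.lTensor (TpowB k B m) (comulIter k B c)) x) :=
  one_smul k _

lemma embedAt_zero (m c : ℕ) (v : TpowB k B c) :
    embedAt k B m 0 c v = (tpowSplit k B m c).symm ((1 : TpowB k B m) ⊗ₜ v) :=
  one_smul k _

/-- the coaction `u₁⊗⋯⊗u_{m+1} ↦ (u₁⊗⋯⊗u_{m+1}⁽¹⁾) ⊗ u_{m+1}⁽²⁾` on the last tensor factor. -/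
noncomputable def Dmap (m : ℕ) : (TpowB k B (m+1) : Type u) →ₗ[k] (TpowB k B (m+1) : Type u) ⊗[k] B :=
  ((TensorProduct.assoc k (TpowB k B m) B B).symm.toLinearMap ∘ₗ
    LinearMap.lTensor (TpowB k B m) (Coalgebra.comul (R := k) (A := B)) :
      (TpowB k B m : Type u) ⊗[k] B →ₗ[k] ((TpowB k B m : Type u) ⊗[k] B) ⊗[k] B)

lemma Dmap_tmul (m : ℕ) (y : TpowB k B m) (α : B) :
    Dmap k B m (y ⊗ₜ α) =
      (TensorProduct.assoc k (TpowB k B m) B B).symm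
        (y ⊗ₜ Coalgebra.comul (R := k) α) := rfl

/-- the counit contraction on the last tensor factor. -/
noncomputable def Emap (m : ℕ) : (TpowB k B (m+1) : Type u) →ₗ[k] TpowB k B m :=
  ((TensorProduct.rid k (TpowB k B m)).toLinearMap ∘ₗ
    LinearMap.lTensor (TpowB k B m) (Coalgebra.counit (R := k) (A := B)) :
      (TpowB k B m : Type u) ⊗[k] B →ₗ[k] TpowB k B m)

lemma Emap_tmul (m : ℕ) (y : TpowB k B m) (α : B) :
    Emap k B m (y ⊗ₜ α) = Coalgebra.counit (R := k) α • y := rfl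

lemma comulAt_zero_succ (m c : ℕ) (x : (TpowB k B m : Type u) ⊗[k] B) :
    comulAt k B m 0 (c+1) x = LinearMap.rTensor B (comulAt k B m 0 c) (Dmap k B m x) := by
  induction x using TensorProduct.induction_on with
  | zero => rw [map_zero, map_zero, map_zero]
  | add x₁ x₂ h₁ h₂ => rw [map_add, map_add, map_add, h₁, h₂]
  | tmul y α =>
      rw [comulAt_zero, Dmap_tmul]
      have : (LinearMap.lTensor (TpowB k B m) (comulIter k B (c+1))) (y ⊗ₜ α) =
          (LinearMap.lTensor (TpowB k B m)
            ((TensorProduct.map (comulIter k B c) LinearMap.id))) (y ⊗ₜ (Coalgebra.comul (R := k) α)) := rfl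
      rw [this]
      generalize (Coalgebra.comul (R := k) (A := B) α) = d
      induction d using TensorProduct.induction_on with
      | zero => simp only [TensorProduct.tmul_zero, map_zero]
      | add d₁ d₂ h₁ h₂ =>
          simp only [TensorProduct.tmul_add, map_add] at h₁ h₂ ⊢
          rw [h₁, h₂]
      | tmul a₁ a₂ =>
          rw [LinearMap.lTensor_tmul, TensorProduct.map_tmul, LinearMap.id_apply,
            tpowSplit_symm_succ, TensorProduct.assoc_symm_tmul, LinearMap.rTensor_tmul,
            comulAt_zero]
          rfl

lemma embedAt_zero_succ (m c : ℕ) (z : TpowB k B c) (β : B) :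
    embedAt k B m 0 (c+1) (z ⊗ₜ β) =
      (embedAt k B m 0 c z ⊗ₜ β : (TpowB k B (m+c) : Type u) ⊗[k] B) := by
  rw [embedAt_zero, embedAt_zero, tpowSplit_symm_succ]

lemma tpowSplit_apply_symm_succ (a b : ℕ) (θ : (TpowB k B a : Type u) ⊗[k] (TpowB k B b : Type u))
    (β : B) :
    (tpowSplit k B a (b+1)) (((tpowSplit k B a b).symm θ ⊗ₜ β : (TpowB k B (a+b) : Type u) ⊗[k] B)) =
      (TensorProduct.assoc k (TpowB k B a) (TpowB k B b) B) (θ ⊗ₜ β) := by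
  have : (tpowSplit k B a (b+1)) (((tpowSplit k B a b).symm θ ⊗ₜ β : (TpowB k B (a+b) : Type u) ⊗[k] B)) =
      (TensorProduct.assoc k (TpowB k B a) (TpowB k B b) B)
        (((tpowSplit k B a b) ((tpowSplit k B a b).symm θ)) ⊗ₜ β) := rfl
  rw [this, LinearEquiv.apply_symm_apply]

lemma comulAt_succ (p q c : ℕ) (x : (TpowB k B (p+1+q) : Type u) ⊗[k] B) :
    comulAt k B p (q+1) c x = LinearMap.rTensor B (comulAt k B p q c) x := by
  induction x using TensorProduct.induction_on with
  | zero => simp only [map_zero]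
  | add x₁ x₂ h₁ h₂ => simp only [map_add, h₁, h₂]
  | tmul y β =>
      obtain ⟨θ, rfl⟩ : ∃ θ, y = (tpowSplit k B (p+1) q).symm θ :=
        ⟨_, (LinearEquiv.symm_apply_apply _ _).symm⟩
      induction θ using TensorProduct.induction_on with
      | zero => simp only [map_zero, TensorProduct.zero_tmul]
      | add θ₁ θ₂ h₁ h₂ =>
          simp only [map_add, TensorProduct.add_tmul, h₁, h₂]
      | tmul a z =>
          rw [LinearMap.rTensor_tmul]
          have hL : comulAt k B p (q+1) c (((tpowSplit k B (p+1) q).symm (a ⊗ₜ z) ⊗ₜ β :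
              (TpowB k B (p+1+q) : Type u) ⊗[k] B)) =
            (tpowSplit k B (p+c) (q+1)).symm
              ((TensorProduct.map (tpowSplit k B p c).symm.toLinearMap LinearMap.id)
                ((TensorProduct.map (TensorProduct.map LinearMap.id (comulIter k B c)) LinearMap.id)
                  ((tpowSplit k B (p+1) (q+1))
                    (((tpowSplit k B (p+1) q).symm (a ⊗ₜ z) ⊗ₜ β :
                      (TpowB k B (p+1+q) : Type u) ⊗[k] B))))) := rfl
          have hR : comulAt k B p q c ((tpowSplit k B (p+1) q).symm (a ⊗ₜ z)) =
            (tpowSplit k B (p+c) q).symm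
              ((TensorProduct.map (tpowSplit k B p c).symm.toLinearMap LinearMap.id)
                ((TensorProduct.map (TensorProduct.map LinearMap.id (comulIter k B c)) LinearMap.id)
                  ((tpowSplit k B (p+1) q) ((tpowSplit k B (p+1) q).symm (a ⊗ₜ z))))) := rfl
          rw [hL, tpowSplit_apply_symm_succ, TensorProduct.assoc_tmul, hR,
            LinearEquiv.apply_symm_apply]
          rfl

lemma embedAt_succ (p q c : ℕ) (v : TpowB k B c) :
    embedAt k B p (q+1) c v =
      (embedAt k B p q c v ⊗ₜ (1 : B) : (TpowB k B (p+c+q) : Type u) ⊗[k] B) := rfl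

lemma circB_def (p q c : ℕ) (u : TpowB k B (p+1+q)) (v : TpowB k B c) :
    circB k B p q c u v = comulAt k B p q c u * embedAt k B p q c v := rfl

lemma circB_succ_left (p q c : ℕ) (y : TpowB k B (p+1+q)) (β : B) (v : TpowB k B c) :
    circB k B p (q+1) c ((y ⊗ₜ β : (TpowB k B (p+1+q) : Type u) ⊗[k] B)) v =
      (circB k B p q c y v ⊗ₜ β : (TpowB k B (p+c+q) : Type u) ⊗[k] B) := by
  rw [circB_def, circB_def, comulAt_succ, embedAt_succ, LinearMap.rTensor_tmul]
  exact (Algebra.TensorProduct.tmul_mul_tmul _ _ _ _).trans (by rw [mul_one])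

lemma tpowCast_rfl {a : ℕ} (h : a = a) (x : TpowB k B a) : tpowCast k B h x = x := rfl

lemma tpowCast_succ {a b : ℕ} (h : a = b) (h' : a+1 = b+1) (x : TpowB k B a) (β : B) :
    tpowCast k B h' ((x ⊗ₜ β : (TpowB k B a : Type u) ⊗[k] B)) =
      (tpowCast k B h x ⊗ₜ β : (TpowB k B b : Type u) ⊗[k] B) := by subst h; rfl

/-- `circB` in its first argument, as a linear map. -/
noncomputable def circL (p q c : ℕ) (v : TpowB k B c) :
    (TpowB k B (p+1+q) : Type u) →ₗ[k] TpowB k B (p+c+q) :=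
  (LinearMap.mulRight k (embedAt k B p q c v)) ∘ₗ (comulAt k B p q c)

lemma circL_apply (p q c : ℕ) (v : TpowB k B c) (u : TpowB k B (p+1+q)) :
    circL k B p q c v u = circB k B p q c u v := rfl

/-- peeling the second argument of `circB` at `q = 0`. -/
lemma circB_peel (p X : ℕ) (u : TpowB k B (p+1)) (z : TpowB k B X) (b : B) :
    circB k B p 0 (X+1) u ((z ⊗ₜ b : (TpowB k B X : Type u) ⊗[k] B)) =
      TensorProduct.map (circL k B p 0 X z) (LinearMap.mulRight k b) (Dmap k B p u) := by
  rw [circB_def, comulAt_zero_succ, embedAt_zero_succ]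
  generalize Dmap k B p u = d
  induction d using TensorProduct.induction_on with
  | zero => simp only [map_zero, zero_mul]
  | add d₁ d₂ h₁ h₂ => simp only [map_add, add_mul, h₁, h₂]
  | tmul u₁ u₂ =>
      rw [LinearMap.rTensor_tmul, TensorProduct.map_tmul]
      exact (Algebra.TensorProduct.tmul_mul_tmul _ _ _ _).trans rfl

lemma Dmap_mul' (m : ℕ) (x y : (TpowB k B m : Type u) ⊗[k] B) :
    Dmap k B m (x * y) = Dmap k B m x * Dmap k B m y := by
  induction x using TensorProduct.induction_on with
  | zero => simp only [zero_mul, map_zero]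
  | add x₁ x₂ h₁ h₂ => simp only [add_mul, map_add, h₁, h₂]
  | tmul y₁ α =>
      induction y using TensorProduct.induction_on with
      | zero => simp only [mul_zero, map_zero]
      | add x₁ x₂ h₁ h₂ => simp only [mul_add, map_add, h₁, h₂]
      | tmul y₂ α' =>
          rw [Algebra.TensorProduct.tmul_mul_tmul, Dmap_tmul, Dmap_tmul, Dmap_tmul,
            Bialgebra.comul_mul]
          generalize Coalgebra.comul (R := k) (A := B) α = d
          generalize Coalgebra.comul (R := k) (A := B) α' = d'
          induction d using TensorProduct.induction_on with
          | zero => simp only [zero_mul, TensorProduct.tmul_zero, map_zero, TensorProduct.zero_tmul]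
          | add d₁ d₂ h₁ h₂ =>
              simp only [add_mul, TensorProduct.tmul_add, map_add, TensorProduct.add_tmul, h₁, h₂]
          | tmul a₁ a₂ =>
              induction d' using TensorProduct.induction_on with
              | zero => simp only [mul_zero, TensorProduct.tmul_zero, map_zero, TensorProduct.zero_tmul]
              | add d₁ d₂ h₁ h₂ =>
                  simp only [mul_add, TensorProduct.tmul_add, map_add, TensorProduct.add_tmul, h₁, h₂]
              | tmul b₁ b₂ =>
                  simp only [Algebra.TensorProduct.tmul_mul_tmul, TensorProduct.assoc_symm_tmul]

lemma Dmap_mul (m : ℕ) (x y : TpowB k B (m+1)) :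
    Dmap k B m (x * y) = Dmap k B m x * Dmap k B m y := Dmap_mul' k B m x y

lemma Emap_mul' (m : ℕ) (x y : (TpowB k B m : Type u) ⊗[k] B) :
    Emap k B m (x * y) = Emap k B m x * Emap k B m y := by
  induction x using TensorProduct.induction_on with
  | zero => simp only [zero_mul, map_zero]
  | add x₁ x₂ h₁ h₂ => simp only [add_mul, map_add, h₁, h₂]
  | tmul y₁ α =>
      induction y using TensorProduct.induction_on with
      | zero => simp only [mul_zero, map_zero]
      | add x₁ x₂ h₁ h₂ => simp only [mul_add, map_add, h₁, h₂]
      | tmul y₂ α' =>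
          rw [Algebra.TensorProduct.tmul_mul_tmul, Emap_tmul, Emap_tmul, Emap_tmul,
            Bialgebra.counit_mul, smul_mul_assoc, mul_smul_comm, smul_smul]

lemma Emap_mul (m : ℕ) (x y : TpowB k B (m+1)) :
    Emap k B m (x * y) = Emap k B m x * Emap k B m y := Emap_mul' k B m x y

/-- naturality of the last-factor coaction shape in the first factor. -/
lemma Dshape_comm {M N : Type u} [AddCommGroup M] [AddCommGroup N] [Module k M] [Module k N]
    (g : M →ₗ[k] N) (w : M ⊗[k] B) :
    ((TensorProduct.assoc k N B B).symm.toLinearMap ∘ₗ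
        LinearMap.lTensor N (Coalgebra.comul (R := k) (A := B)))
      (LinearMap.rTensor B g w) =
    LinearMap.rTensor B (LinearMap.rTensor B g)
      (((TensorProduct.assoc k M B B).symm.toLinearMap ∘ₗ
        LinearMap.lTensor M (Coalgebra.comul (R := k) (A := B))) w) := by
  induction w using TensorProduct.induction_on with
  | zero => simp only [map_zero]
  | add w₁ w₂ h₁ h₂ => simp only [map_add, h₁, h₂]
  | tmul y α =>
      simp only [LinearMap.comp_apply, LinearMap.rTensor_tmul, LinearMap.lTensor_tmul,
        LinearEquiv.coe_coe]
      generalize Coalgebra.comul (R := k) (A := B) α = d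
      induction d using TensorProduct.induction_on with
      | zero => simp only [TensorProduct.tmul_zero, map_zero]
      | add d₁ d₂ h₁ h₂ => simp only [TensorProduct.tmul_add, map_add, h₁, h₂]
      | tmul a₁ a₂ =>
          simp only [TensorProduct.assoc_symm_tmul, LinearMap.rTensor_tmul]

lemma Dmap_coassoc (m : ℕ) (x : (TpowB k B m : Type u) ⊗[k] B) :
    Dmap k B (m+1) (Dmap k B m x) = LinearMap.rTensor B (Dmap k B m) (Dmap k B m x) := by
  induction x using TensorProduct.induction_on with
  | zero => simp only [map_zero]
  | add x₁ x₂ h₁ h₂ => simp only [map_add, h₁, h₂]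
  | tmul y α =>
      rw [Dmap_tmul]
      have claim1 : ∀ d : B ⊗[k] B,
          Dmap k B (m+1) ((TensorProduct.assoc k (TpowB k B m) B B).symm (y ⊗ₜ d)) =
          LinearMap.rTensor B (LinearMap.rTensor B (TensorProduct.mk k (TpowB k B m) B y))
            ((TensorProduct.assoc k B B B).symm
              (LinearMap.lTensor B (Coalgebra.comul (R := k) (A := B)) d)) := by
        intro d
        induction d using TensorProduct.induction_on with
        | zero => simp only [TensorProduct.tmul_zero, map_zero]
        | add d₁ d₂ h₁ h₂ => simp only [TensorProduct.tmul_add, map_add, h₁, h₂]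
        | tmul β₁ β₂ =>
            rw [TensorProduct.assoc_symm_tmul, LinearMap.lTensor_tmul]
            have : Dmap k B (m+1) ((y ⊗ₜ β₁) ⊗ₜ β₂ : (TpowB k B (m+1) : Type u) ⊗[k] B) =
                (TensorProduct.assoc k (TpowB k B (m+1)) B B).symm
                  ((y ⊗ₜ β₁) ⊗ₜ (Coalgebra.comul (R := k) β₂)) := Dmap_tmul k B (m+1) _ _
            rw [this]
            generalize Coalgebra.comul (R := k) (A := B) β₂ = e
            induction e using TensorProduct.induction_on with
            | zero => simp only [TensorProduct.tmul_zero, map_zero]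
            | add e₁ e₂ h₁ h₂ => simp only [TensorProduct.tmul_add, map_add, h₁, h₂]
            | tmul γ₁ γ₂ =>
                simp only [TensorProduct.assoc_symm_tmul, LinearMap.rTensor_tmul,
                  TensorProduct.mk_apply]
      have claim2 : ∀ d : B ⊗[k] B,
          LinearMap.rTensor B (Dmap k B m) ((TensorProduct.assoc k (TpowB k B m) B B).symm (y ⊗ₜ d)) =
          LinearMap.rTensor B (LinearMap.rTensor B (TensorProduct.mk k (TpowB k B m) B y))
            (LinearMap.rTensor B (Coalgebra.comul (R := k) (A := B)) d) := by
        intro d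
        induction d using TensorProduct.induction_on with
        | zero => simp only [TensorProduct.tmul_zero, map_zero]
        | add d₁ d₂ h₁ h₂ => simp only [TensorProduct.tmul_add, map_add, h₁, h₂]
        | tmul β₁ β₂ =>
            rw [TensorProduct.assoc_symm_tmul, LinearMap.rTensor_tmul, LinearMap.rTensor_tmul,
              Dmap_tmul]
            generalize Coalgebra.comul (R := k) (A := B) β₁ = e
            induction e using TensorProduct.induction_on with
            | zero => simp only [TensorProduct.tmul_zero, map_zero, TensorProduct.zero_tmul]
            | add e₁ e₂ h₁ h₂ =>
                simp only [TensorProduct.tmul_add, map_add, TensorProduct.add_tmul, h₁, h₂]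
            | tmul γ₁ γ₂ =>
                simp only [TensorProduct.assoc_symm_tmul, LinearMap.rTensor_tmul,
                  TensorProduct.mk_apply]
      rw [claim1, claim2, ← Coalgebra.coassoc_symm_apply (R := k) α]

lemma comulAt_zero_succ_map (m c : ℕ) :
    comulAt k B m 0 (c+1) =
      (LinearMap.rTensor B (comulAt k B m 0 c) ∘ₗ Dmap k B m :
        (TpowB k B (m+1) : Type u) →ₗ[k] (TpowB k B (m+c) : Type u) ⊗[k] B) :=
  LinearMap.ext fun x => comulAt_zero_succ k B m c x

lemma Dmap_comulAt (p s : ℕ) (x : (TpowB k B p : Type u) ⊗[k] B) :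
    Dmap k B (p+s) (comulAt k B p 0 (s+1) x) =
      LinearMap.rTensor B (comulAt k B p 0 (s+1)) (Dmap k B p x) := by
  rw [comulAt_zero_succ]
  have h1 : Dmap k B (p+s) (LinearMap.rTensor B (comulAt k B p 0 s) (Dmap k B p x)) =
      LinearMap.rTensor B (LinearMap.rTensor B (comulAt k B p 0 s))
        (Dmap k B (p+1) (Dmap k B p x)) :=
    Dshape_comm k B (comulAt k B p 0 s) (Dmap k B p x)
  rw [h1, Dmap_coassoc, comulAt_zero_succ_map, LinearMap.rTensor_comp,
    LinearMap.comp_apply]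

lemma Dmap_embedAt (p s : ℕ) (v : (TpowB k B s : Type u) ⊗[k] B) :
    Dmap k B (p+s) (embedAt k B p 0 (s+1) v) =
      LinearMap.rTensor B (embedAt k B p 0 (s+1)) (Dmap k B s v) := by
  induction v using TensorProduct.induction_on with
  | zero => simp only [map_zero]
  | add v₁ v₂ h₁ h₂ => simp only [map_add, h₁, h₂]
  | tmul ζ β =>
      rw [embedAt_zero_succ, Dmap_tmul, Dmap_tmul]
      generalize Coalgebra.comul (R := k) (A := B) β = d
      induction d using TensorProduct.induction_on with
      | zero => simp only [TensorProduct.tmul_zero, map_zero]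
      | add d₁ d₂ h₁ h₂ => simp only [TensorProduct.tmul_add, map_add, h₁, h₂]
      | tmul γ₁ γ₂ =>
          rw [TensorProduct.assoc_symm_tmul, TensorProduct.assoc_symm_tmul,
            LinearMap.rTensor_tmul, embedAt_zero_succ]

lemma Emap_rT {M N : Type u} [AddCommGroup M] [AddCommGroup N] [Module k M] [Module k N]
    (g : M →ₗ[k] N) (w : M ⊗[k] B) :
    ((TensorProduct.rid k N).toLinearMap ∘ₗ
        LinearMap.lTensor N (Coalgebra.counit (R := k) (A := B)))
      (LinearMap.rTensor B g w) =
    g (((TensorProduct.rid k M).toLinearMap ∘ₗ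
        LinearMap.lTensor M (Coalgebra.counit (R := k) (A := B))) w) := by
  induction w using TensorProduct.induction_on with
  | zero => simp only [map_zero]
  | add w₁ w₂ h₁ h₂ => simp only [map_add, h₁, h₂]
  | tmul y α =>
      simp only [LinearMap.comp_apply, LinearMap.rTensor_tmul, LinearMap.lTensor_tmul,
        LinearEquiv.coe_coe, TensorProduct.rid_tmul, map_smul]

lemma Emap_D (m : ℕ) (x : (TpowB k B m : Type u) ⊗[k] B) :
    Emap k B (m+1) (Dmap k B m x) = x := by
  induction x using TensorProduct.induction_on with
  | zero => simp only [map_zero]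
  | add x₁ x₂ h₁ h₂ => simp only [map_add, h₁, h₂]
  | tmul y α =>
      rw [Dmap_tmul]
      have claim : ∀ d : B ⊗[k] B,
          Emap k B (m+1) ((TensorProduct.assoc k (TpowB k B m) B B).symm (y ⊗ₜ d)) =
            y ⊗ₜ (TensorProduct.rid k B
              (LinearMap.lTensor B (Coalgebra.counit (R := k) (A := B)) d)) := by
        intro d
        induction d using TensorProduct.induction_on with
        | zero => simp only [TensorProduct.tmul_zero, map_zero]
        | add d₁ d₂ h₁ h₂ =>
            simp only [TensorProduct.tmul_add, map_add, h₁, h₂]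
        | tmul α₁ α₂ =>
            rw [TensorProduct.assoc_symm_tmul, LinearMap.lTensor_tmul,
              TensorProduct.rid_tmul]
            have : Emap k B (m+1) ((y ⊗ₜ α₁) ⊗ₜ α₂ : (TpowB k B (m+1) : Type u) ⊗[k] B) =
                Coalgebra.counit (R := k) α₂ • ((y ⊗ₜ α₁ : (TpowB k B m : Type u) ⊗[k] B)) :=
              Emap_tmul k B (m+1) _ _
            rw [this, TensorProduct.tmul_smul]
      rw [claim, Coalgebra.lTensor_counit_comul, TensorProduct.rid_tmul, one_smul]

lemma Emap_comulAt (p s : ℕ) (x : (TpowB k B p : Type u) ⊗[k] B) :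
    Emap k B (p+s) (comulAt k B p 0 (s+1) x) = comulAt k B p 0 s x := by
  rw [comulAt_zero_succ]
  have h1 : Emap k B (p+s) (LinearMap.rTensor B (comulAt k B p 0 s) (Dmap k B p x)) =
      comulAt k B p 0 s (Emap k B (p+1) (Dmap k B p x)) :=
    Emap_rT k B (comulAt k B p 0 s) (Dmap k B p x)
  rw [h1, Emap_D]

lemma Emap_embedAt (p s : ℕ) (v : (TpowB k B s : Type u) ⊗[k] B) :
    Emap k B (p+s) (embedAt k B p 0 (s+1) v) = embedAt k B p 0 s (Emap k B s v) := by
  induction v using TensorProduct.induction_on with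
  | zero => simp only [map_zero]
  | add v₁ v₂ h₁ h₂ => simp only [map_add, h₁, h₂]
  | tmul ζ β =>
      rw [embedAt_zero_succ, Emap_tmul, Emap_tmul, map_smul]

lemma comulAt_zero_zero (m : ℕ) (x : (TpowB k B m : Type u) ⊗[k] B) :
    comulAt k B m 0 0 x = Emap k B m x := by
  rw [comulAt_zero]; rfl

lemma embedAt_zero_zero (m : ℕ) (w : TpowB k B 0) :
    embedAt k B m 0 0 w = (show k from w) • (1 : TpowB k B m) := by
  rw [embedAt_zero]; rfl

lemma circB_zero_right (p q c : ℕ) (u : TpowB k B (p+1+q)) :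
    circB k B p q c u 0 = 0 := by
  rw [circB_def, map_zero, mul_zero]

lemma circB_add_right (p q c : ℕ) (u : TpowB k B (p+1+q)) (v₁ v₂ : TpowB k B c) :
    circB k B p q c u (v₁ + v₂) = circB k B p q c u v₁ + circB k B p q c u v₂ := by
  rw [circB_def, circB_def, circB_def, map_add, mul_add]

lemma circB_smul_right (p q c : ℕ) (u : TpowB k B (p+1+q)) (r : k) (v : TpowB k B c) :
    circB k B p q c u (r • v) = r • circB k B p q c u v := by
  rw [circB_def, circB_def, map_smul, mul_smul_comm]

lemma circB_zero_zero (a : ℕ) (x : TpowB k B (a+1)) (w : TpowB k B 0) :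
    circB k B a 0 0 x w = (show k from w) • Emap k B a x := by
  rw [circB_def, show comulAt k B a 0 0 x = Emap k B a x from comulAt_zero_zero k B a x,
    show embedAt k B a 0 0 w = (show k from w) • (1 : TpowB k B a) from embedAt_zero_zero k B a w,
    mul_smul_comm, mul_one]

lemma Emap_circB (p s : ℕ) (u : TpowB k B (p+1)) (v : TpowB k B (s+1)) :
    Emap k B (p+s) (circB k B p 0 (s+1) u v) = circB k B p 0 s u (Emap k B s v) := by
  rw [circB_def, circB_def,
    show Emap k B (p+s) (comulAt k B p 0 (s+1) u * embedAt k B p 0 (s+1) v) =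
      Emap k B (p+s) (comulAt k B p 0 (s+1) u) * Emap k B (p+s) (embedAt k B p 0 (s+1) v) from
        Emap_mul k B (p+s) _ _,
    show Emap k B (p+s) (comulAt k B p 0 (s+1) u) = comulAt k B p 0 s u from
      Emap_comulAt k B p s u,
    show Emap k B (p+s) (embedAt k B p 0 (s+1) v) = embedAt k B p 0 s (Emap k B s v) from
      Emap_embedAt k B p s v]

lemma S00 (p s : ℕ) : ∀ (c : ℕ) (h : p+s+c = p+(s+c)) (u : TpowB k B (p+1))
    (v : TpowB k B (s+1)) (w : TpowB k B c),
    tpowCast k B h (circB k B (p+s) 0 c (circB k B p 0 (s+1) u v) w) =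
      circB k B p 0 (s+c) u (circB k B s 0 c v w) := by
  intro c
  induction c with
  | zero =>
      intro h u v w
      rw [show tpowCast k B h (circB k B (p+s) 0 0 (circB k B p 0 (s+1) u v) w) =
            circB k B (p+s) 0 0 (circB k B p 0 (s+1) u v) w from tpowCast_rfl k B h _,
        circB_zero_zero, circB_zero_zero, circB_smul_right, Emap_circB]
      rfl
  | succ c IH =>
      intro h u v w
      induction w using TensorProduct.induction_on with
      | zero => rw [circB_zero_right, circB_zero_right, map_zero, circB_zero_right]
      | add w₁ w₂ h₁ h₂ =>
          rw [circB_add_right, circB_add_right, map_add, h₁, h₂, circB_add_right]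
      | tmul z b =>
          rw [show circB k B (p+s) 0 (c+1) (circB k B p 0 (s+1) u v) (z ⊗ₜ b) =
                TensorProduct.map (circL k B (p+s) 0 c z) (LinearMap.mulRight k b)
                  (Dmap k B (p+s) (circB k B p 0 (s+1) u v)) from circB_peel k B (p+s) c _ z b,
            show circB k B s 0 (c+1) v (z ⊗ₜ b) =
                TensorProduct.map (circL k B s 0 c z) (LinearMap.mulRight k b)
                  (Dmap k B s v) from circB_peel k B s c v z b,
            show Dmap k B (p+s) (circB k B p 0 (s+1) u v) =
                LinearMap.rTensor B (comulAt k B p 0 (s+1)) (Dmap k B p u) *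
                  LinearMap.rTensor B (embedAt k B p 0 (s+1)) (Dmap k B s v) from by
              rw [circB_def,
                show Dmap k B (p+s) (comulAt k B p 0 (s+1) u * embedAt k B p 0 (s+1) v) =
                  Dmap k B (p+s) (comulAt k B p 0 (s+1) u) *
                    Dmap k B (p+s) (embedAt k B p 0 (s+1) v) from Dmap_mul k B (p+s) _ _,
                Dmap_comulAt, Dmap_embedAt]]
          generalize Dmap k B s v = dv
          induction dv using TensorProduct.induction_on with
          | zero => rw [map_zero, mul_zero, map_zero, map_zero, map_zero, circB_zero_right]
          | add dv₁ dv₂ h₁ h₂ =>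
              rw [map_add, mul_add, map_add, map_add, map_add, circB_add_right, h₁, h₂]
          | tmul v₁ v₂ =>
              rw [LinearMap.rTensor_tmul, TensorProduct.map_tmul, LinearMap.mulRight_apply,
                show circB k B p 0 (s+(c+1)) u (circL k B s 0 c z v₁ ⊗ₜ (v₂ * b)) =
                  TensorProduct.map (circL k B p 0 (s+c) (circL k B s 0 c z v₁))
                    (LinearMap.mulRight k (v₂ * b)) (Dmap k B p u) from
                  circB_peel k B p (s+c) u _ _]
              generalize Dmap k B p u = du
              induction du using TensorProduct.induction_on with
              | zero => rw [map_zero, zero_mul, map_zero, map_zero, map_zero]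
              | add du₁ du₂ h₁ h₂ =>
                  rw [map_add, add_mul, map_add, map_add, map_add, h₁, h₂]
              | tmul u₁ u₂ =>
                  rw [LinearMap.rTensor_tmul,
                    show ((comulAt k B p 0 (s+1) u₁ ⊗ₜ u₂ :
                        (TpowB k B (p+s+1) : Type u) ⊗[k] B) *
                        (embedAt k B p 0 (s+1) v₁ ⊗ₜ v₂)) =
                      ((comulAt k B p 0 (s+1) u₁ * embedAt k B p 0 (s+1) v₁) ⊗ₜ (u₂ * v₂)) from
                      Algebra.TensorProduct.tmul_mul_tmul _ _ _ _,
                    ← circB_def, TensorProduct.map_tmul, LinearMap.mulRight_apply,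
                    circL_apply,
                    show tpowCast k B h ((circB k B (p+s) 0 c (circB k B p 0 (s+1) u₁ v₁) z
                        ⊗ₜ (u₂ * v₂ * b)) : (TpowB k B (p+s+c) : Type u) ⊗[k] B) =
                      (tpowCast k B (show p+s+c = p+(s+c) from Nat.succ_injective h)
                          (circB k B (p+s) 0 c (circB k B p 0 (s+1) u₁ v₁) z)
                        ⊗ₜ (u₂ * v₂ * b)) from
                        tpowCast_succ k B (show p+s+c = p+(s+c) from Nat.succ_injective h) h _ _,
                    IH (show p+s+c = p+(s+c) from Nat.succ_injective h) u₁ v₁ z,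
                    TensorProduct.map_tmul, LinearMap.mulRight_apply, circL_apply, circL_apply,
                    mul_assoc]

lemma circB_zero_left (p q c : ℕ) (v : TpowB k B c) :
    circB k B p q c 0 v = 0 := by
  rw [circB_def, map_zero, zero_mul]

lemma circB_add_left (p q c : ℕ) (u₁ u₂ : TpowB k B (p+1+q)) (v : TpowB k B c) :
    circB k B p q c (u₁ + u₂) v = circB k B p q c u₁ v + circB k B p q c u₂ v := by
  rw [circB_def, circB_def, circB_def, map_add, add_mul]

lemma S0t (p s c : ℕ) : ∀ (t : ℕ) (h₁ : p+(s+1+t) = p+s+1+t) (h₂ : p+s+c+t = p+(s+c+t))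
    (u : TpowB k B (p+1)) (v : TpowB k B (s+1+t)) (w : TpowB k B c),
    tpowCast k B h₂ (circB k B (p+s) t c (tpowCast k B h₁ (circB k B p 0 (s+1+t) u v)) w) =
      circB k B p 0 (s+c+t) u (circB k B s t c v w) := by
  intro t
  induction t with
  | zero =>
      intro h₁ h₂ u v w
      rw [show tpowCast k B h₁ (circB k B p 0 (s+1+0) u v) = circB k B p 0 (s+1+0) u v from
        tpowCast_rfl k B h₁ _]
      exact S00 k B p s c h₂ u v w
  | succ t IH =>
      intro h₁ h₂ u v w
      induction v using TensorProduct.induction_on with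
      | zero =>
          rw [circB_zero_right, map_zero, circB_zero_left, map_zero, circB_zero_left,
            circB_zero_right]
      | add v₁ v₂ hh₁ hh₂ =>
          rw [circB_add_right, map_add, circB_add_left, map_add, hh₁, hh₂, circB_add_left,
            circB_add_right]
      | tmul z β =>
          rw [show circB k B p 0 (s+1+(t+1)) u (z ⊗ₜ β) =
                TensorProduct.map (circL k B p 0 (s+1+t) z) (LinearMap.mulRight k β)
                  (Dmap k B p u) from circB_peel k B p (s+1+t) u z β,
            show circB k B s (t+1) c (z ⊗ₜ β) w =
                (circB k B s t c z w ⊗ₜ β : (TpowB k B (s+c+t) : Type u) ⊗[k] B) from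
              circB_succ_left k B s t c z β w,
            show circB k B p 0 (s+c+(t+1)) u ((circB k B s t c z w ⊗ₜ β :
                (TpowB k B (s+c+t) : Type u) ⊗[k] B)) =
                TensorProduct.map (circL k B p 0 (s+c+t) (circB k B s t c z w))
                  (LinearMap.mulRight k β) (Dmap k B p u) from
              circB_peel k B p (s+c+t) u _ β]
          generalize Dmap k B p u = du
          induction du using TensorProduct.induction_on with
          | zero =>
              rw [map_zero, map_zero, circB_zero_left, map_zero, map_zero]
          | add du₁ du₂ hh₁ hh₂ =>
              rw [map_add, map_add, circB_add_left, map_add, hh₁, hh₂, map_add]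
          | tmul u₁ u₂ =>
              rw [TensorProduct.map_tmul, TensorProduct.map_tmul, LinearMap.mulRight_apply,
                circL_apply, circL_apply,
                show tpowCast k B h₁ ((circB k B p 0 (s+1+t) u₁ z ⊗ₜ (u₂ * β)) :
                    (TpowB k B (p+(s+1+t)) : Type u) ⊗[k] B) =
                  (tpowCast k B (show p+(s+1+t) = p+s+1+t from Nat.succ_injective h₁)
                      (circB k B p 0 (s+1+t) u₁ z) ⊗ₜ (u₂ * β)) from
                  tpowCast_succ k B (show p+(s+1+t) = p+s+1+t from Nat.succ_injective h₁) h₁ _ _,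
                show circB k B (p+s) (t+1) c
                    ((tpowCast k B (show p+(s+1+t) = p+s+1+t from Nat.succ_injective h₁)
                        (circB k B p 0 (s+1+t) u₁ z) ⊗ₜ (u₂ * β) :
                      (TpowB k B (p+s+1+t) : Type u) ⊗[k] B)) w =
                  (circB k B (p+s) t c
                      (tpowCast k B (show p+(s+1+t) = p+s+1+t from Nat.succ_injective h₁)
                        (circB k B p 0 (s+1+t) u₁ z)) w ⊗ₜ (u₂ * β)) from
                  circB_succ_left k B (p+s) t c _ _ w,
                show tpowCast k B h₂ ((circB k B (p+s) t c
                      (tpowCast k B (show p+(s+1+t) = p+s+1+t from Nat.succ_injective h₁)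
                        (circB k B p 0 (s+1+t) u₁ z)) w ⊗ₜ (u₂ * β)) :
                    (TpowB k B (p+s+c+t) : Type u) ⊗[k] B) =
                  (tpowCast k B (show p+s+c+t = p+(s+c+t) from Nat.succ_injective h₂)
                      (circB k B (p+s) t c
                        (tpowCast k B (show p+(s+1+t) = p+s+1+t from Nat.succ_injective h₁)
                          (circB k B p 0 (s+1+t) u₁ z)) w) ⊗ₜ (u₂ * β)) from
                  tpowCast_succ k B (show p+s+c+t = p+(s+c+t) from Nat.succ_injective h₂) h₂ _ _,
                IH (show p+(s+1+t) = p+s+1+t from Nat.succ_injective h₁)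
                  (show p+s+c+t = p+(s+c+t) from Nat.succ_injective h₂) u₁ z w]

lemma Smain (p s t c : ℕ) : ∀ (q : ℕ) (h₁ : p+(s+1+t)+q = p+s+1+(t+q))
    (h₂ : p+s+c+(t+q) = p+(s+c+t)+q)
    (u : TpowB k B (p+1+q)) (v : TpowB k B (s+1+t)) (w : TpowB k B c),
    tpowCast k B h₂ (circB k B (p+s) (t+q) c
        (tpowCast k B h₁ (circB k B p q (s+1+t) u v)) w) =
      circB k B p q (s+c+t) u (circB k B s t c v w) := by
  intro q
  induction q with
  | zero => exact fun h₁ h₂ u v w => S0t k B p s c t h₁ h₂ u v w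
  | succ q IH =>
      intro h₁ h₂ u v w
      induction u using TensorProduct.induction_on with
      | zero =>
          rw [circB_zero_left, map_zero, circB_zero_left, map_zero, circB_zero_left]
      | add u₁ u₂ hh₁ hh₂ =>
          rw [circB_add_left, map_add, circB_add_left, map_add, hh₁, hh₂, circB_add_left]
      | tmul y β =>
          rw [show circB k B p (q+1) (s+1+t) (y ⊗ₜ β) v =
                (circB k B p q (s+1+t) y v ⊗ₜ β :
                  (TpowB k B (p+(s+1+t)+q) : Type u) ⊗[k] B) from
              circB_succ_left k B p q (s+1+t) y β v,
            show tpowCast k B h₁ ((circB k B p q (s+1+t) y v ⊗ₜ β :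
                (TpowB k B (p+(s+1+t)+q) : Type u) ⊗[k] B)) =
              (tpowCast k B (show p+(s+1+t)+q = p+s+1+(t+q) from Nat.succ_injective h₁)
                  (circB k B p q (s+1+t) y v) ⊗ₜ β) from
              tpowCast_succ k B (show p+(s+1+t)+q = p+s+1+(t+q) from Nat.succ_injective h₁) h₁ _ _,
            show circB k B (p+s) (t+(q+1)) c
                ((tpowCast k B (show p+(s+1+t)+q = p+s+1+(t+q) from Nat.succ_injective h₁)
                    (circB k B p q (s+1+t) y v) ⊗ₜ β :
                  (TpowB k B (p+s+1+(t+q)) : Type u) ⊗[k] B)) w =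
              (circB k B (p+s) (t+q) c
                  (tpowCast k B (show p+(s+1+t)+q = p+s+1+(t+q) from Nat.succ_injective h₁)
                    (circB k B p q (s+1+t) y v)) w ⊗ₜ β) from
              circB_succ_left k B (p+s) (t+q) c _ β w,
            show tpowCast k B h₂ ((circB k B (p+s) (t+q) c
                  (tpowCast k B (show p+(s+1+t)+q = p+s+1+(t+q) from Nat.succ_injective h₁)
                    (circB k B p q (s+1+t) y v)) w ⊗ₜ β :
                (TpowB k B (p+s+c+(t+q)) : Type u) ⊗[k] B)) =
              (tpowCast k B (show p+s+c+(t+q) = p+(s+c+t)+q from Nat.succ_injective h₂)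
                  (circB k B (p+s) (t+q) c
                    (tpowCast k B (show p+(s+1+t)+q = p+s+1+(t+q) from Nat.succ_injective h₁)
                      (circB k B p q (s+1+t) y v)) w) ⊗ₜ β) from
              tpowCast_succ k B (show p+s+c+(t+q) = p+(s+c+t)+q from Nat.succ_injective h₂) h₂ _ _,
            IH (show p+(s+1+t)+q = p+s+1+(t+q) from Nat.succ_injective h₁)
              (show p+s+c+(t+q) = p+(s+c+t)+q from Nat.succ_injective h₂) y v w,
            show circB k B p (q+1) (s+c+t) (y ⊗ₜ β) (circB k B s t c v w) =
                (circB k B p q (s+c+t) y (circB k B s t c v w) ⊗ₜ β :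
                  (TpowB k B (p+(s+c+t)+q) : Type u) ⊗[k] B) from
              circB_succ_left k B p q (s+c+t) y β _]
end Aux

/-- The partial compositions of the collection `𝔹(n) = B^{⊗n}` satisfy the
inner ("sequential") operad associativity axiom: for `u ∈ B^{⊗a}`, `v ∈ B^{⊗b}`, `w ∈ B^{⊗c}`
and `j ≤ i < b + j` one has `(u ∘_j v) ∘_i w = u ∘_j (v ∘_{i-j+1} w)`.  Here `j = p + 1`,
`a = p + 1 + q`, `i = j + s`, `b = s + 1 + t` (so that `j ≤ i < b + j`), and the
index bookkeeping is mediated by the canonical cast between tensor powers of equal length. -/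
theorem circB_assoc_inner
    (k : Type u) [CommRing k]
    (B : Type u) [Ring B] [Bialgebra k B]
    (p q s t c : ℕ)
    (u : TpowB k B (p + 1 + q)) (v : TpowB k B (s + 1 + t)) (w : TpowB k B c) :
    tpowCast k B (by omega : (p + s) + c + (t + q) = p + (s + c + t) + q)
        (circB k B (p + s) (t + q) c
          (tpowCast k B (by omega : p + (s + 1 + t) + q = (p + s) + 1 + (t + q))
            (circB k B p q (s + 1 + t) u v)) w) =
      circB k B p q (s + c + t) u (circB k B s t c v w) := by
  exact Smain k B p s t c q _ _ u v w
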